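/- arXiv:1112.4088 — 2 statements merged into one kernel-verified Lean document; each statement's English description precedes it below -/
import Mathlib

section
/- Let Γ be the semidirect product (ℚ³ ⊕ ℚ³) ⋊ SL(3,ℚ) and α ∈ ℝ. Define Ω̃_α : Γ × Γ → S¹ by Ω̃_α((v,A),(w,B)) = Ω_α(v, A · w). Then Ω̃_α is a normalized 2-cocycle on Γ: for all g, h, k ∈ Γ one has Ω̃_α(g,h) · Ω̃_α(gh, k) = Ω̃_α(g, hk) · Ω̃_α(h,k), and Ω̃_α(g, e) = Ω̃_α(e, g) = 1. Moreover Ω̃_α restricts to Ω_α on the subgroup ℚ³ ⊕ ℚ³. -/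
open Matrix

/-- The multiplicative group structure on `AddAut A` of the older Mathlib
(Mathlib now makes `AddAut A` an additive group). -/
instance AddAut.oldGroup {A : Type*} [Add A] : Group (AddAut A) where
  mul g h := AddEquiv.trans h g
  one := AddEquiv.refl _
  inv := AddEquiv.symm
  mul_assoc _ _ _ := rfl
  one_mul _ := rfl
  mul_one _ := rfl
  inv_mul_cancel := AddEquiv.self_trans_symm

/-- The additive group `R³ ⊕ R³`. -/
abbrev VV (R : Type*) := (Fin 3 → R) × (Fin 3 → R)

/-- Transpose, as a map on `SL(3,R)`. -/
def transposeSL {R : Type*} [CommRing R] (A : Matrix.SpecialLinearGroup (Fin 3) R) :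
    Matrix.SpecialLinearGroup (Fin 3) R :=
  ⟨A.val.transpose, by rw [Matrix.det_transpose]; exact A.prop⟩

/-- The group homomorphism `A ↦ (Aᵀ)⁻¹` on `SL(3,R)`. -/
def dualHom {R : Type*} [CommRing R] :
    Matrix.SpecialLinearGroup (Fin 3) R →* Matrix.SpecialLinearGroup (Fin 3) R where
  toFun A := (transposeSL A)⁻¹
  map_one' := by
    show (transposeSL 1)⁻¹ = 1
    rw [show transposeSL (1 : Matrix.SpecialLinearGroup (Fin 3) R) = 1 from
      Subtype.ext (by simp [transposeSL]), inv_one]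
  map_mul' A B := by
    show (transposeSL (A * B))⁻¹ = (transposeSL A)⁻¹ * (transposeSL B)⁻¹
    have h : transposeSL (A * B) = transposeSL B * transposeSL A :=
      Subtype.ext (by simp [transposeSL, Matrix.transpose_mul]; rfl)
    rw [h, _root_.mul_inv_rev]

/-- Linear automorphisms as additive automorphisms, as a group homomorphism. -/
def linToAddAut {R : Type*} [CommRing R] :
    ((Fin 3 → R) ≃ₗ[R] (Fin 3 → R)) →* AddAut (Fin 3 → R) where
  toFun e := e.toAddEquiv
  map_one' := rfl
  map_mul' _ _ := rfl

/-- Pairs of additive automorphisms give additive automorphisms of the product. -/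
def addAutProd {R : Type*} [CommRing R] :
    AddAut (Fin 3 → R) × AddAut (Fin 3 → R) →* AddAut (VV R) where
  toFun p := AddEquiv.prodCongr p.1 p.2
  map_one' := rfl
  map_mul' _ _ := rfl

/-- The action of `SL(3,R)` on `R³ ⊕ R³` given by `A · (x,y) = (Ax, (Aᵀ)⁻¹y)`,
as a homomorphism into additive automorphisms. -/
noncomputable def sl3Act {R : Type*} [CommRing R] :
    Matrix.SpecialLinearGroup (Fin 3) R →* AddAut (VV R) :=
  addAutProd.comp
    (((linToAddAut.comp Matrix.SpecialLinearGroup.toLin')).prod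
      ((linToAddAut.comp Matrix.SpecialLinearGroup.toLin').comp dualHom))

/-- Additive automorphisms as multiplicative automorphisms of `Multiplicative`. -/
def addAutToMulAut {A : Type*} [AddGroup A] : AddAut A →* MulAut (Multiplicative A) where
  toFun e := AddEquiv.toMultiplicative e
  map_one' := rfl
  map_mul' _ _ := rfl

/-- The action of `SL(3,R)` on `Multiplicative (R³ ⊕ R³)`. -/
noncomputable def sl3ActM (R : Type*) [CommRing R] :
    Matrix.SpecialLinearGroup (Fin 3) R →* MulAut (Multiplicative (VV R)) :=
  addAutToMulAut.comp sl3Act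

/-- The group `Γ_R = (R³ ⊕ R³) ⋊ SL(3,R)`. -/
abbrev GammaR (R : Type*) [CommRing R] :=
  SemidirectProduct (Multiplicative (VV R)) (Matrix.SpecialLinearGroup (Fin 3) R) (sl3ActM R)

/-- Coordinatewise integer casting `ℤ³ → ℚ³` as an additive homomorphism. -/
def intCast3 : (Fin 3 → ℤ) →+ (Fin 3 → ℚ) := (Int.castAddHom ℚ).compLeft (Fin 3)

/-- The inclusion `ℤ³ ⊕ ℤ³ → ℚ³ ⊕ ℚ³`. -/
def intVec : VV ℤ →+ VV ℚ := intCast3.prodMap intCast3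

/-- The subgroup `Λ = ℤ³ ⊕ ℤ³` of `Γ = (ℚ³ ⊕ ℚ³) ⋊ SL(3,ℚ)`. -/
noncomputable def LambdaSub : Subgroup (GammaR ℚ) :=
  (AddSubgroup.toSubgroup intVec.range).map SemidirectProduct.inl

/-- The dot product on `R³`. -/
def dotR {R : Type*} [CommRing R] (x y : Fin 3 → R) : R := ∑ i, x i * y i

/-- The 2-cocycle `Ω_α` on `ℚ³ ⊕ ℚ³`. -/
noncomputable def OmegaQ (α : ℝ) (g h : VV ℚ) : Circle :=
  Circle.exp (2 * Real.pi * α * ((dotR g.1 h.2 - dotR g.2 h.1 : ℚ) : ℝ))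

/-- The extension `Ω̃_α` of `Ω_α` to `Γ = (ℚ³ ⊕ ℚ³) ⋊ SL(3,ℚ)`. -/
noncomputable def OmegaT (α : ℝ) (g h : GammaR ℚ) : Circle :=
  OmegaQ α (Multiplicative.toAdd g.left) (sl3Act g.right (Multiplicative.toAdd h.left))


namespace OmegaAux

/-- The symplectic-type form. -/
def sig (u u' : VV ℚ) : ℚ := dotR u.1 u'.2 - dotR u.2 u'.1

lemma dotR_eq (x y : Fin 3 → ℚ) : dotR x y = x ⬝ᵥ y := rfl

lemma sl3Act_apply (A : Matrix.SpecialLinearGroup (Fin 3) ℚ) (u : VV ℚ) :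
    sl3Act A u = (A.val *ᵥ u.1, Matrix.adjugate A.valᵀ *ᵥ u.2) := by
  show (Matrix.SpecialLinearGroup.toLin' A u.1, Matrix.SpecialLinearGroup.toLin' (dualHom A) u.2) = _
  have h : ((dualHom A : Matrix.SpecialLinearGroup (Fin 3) ℚ) : Matrix (Fin 3) (Fin 3) ℚ)
      = Matrix.adjugate A.valᵀ := by
    show (((transposeSL A)⁻¹ : Matrix.SpecialLinearGroup (Fin 3) ℚ) : Matrix (Fin 3) (Fin 3) ℚ) = _
    rw [Matrix.SpecialLinearGroup.coe_inv]; rfl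
  simp [Matrix.SpecialLinearGroup.toLin'_apply, Matrix.toLin'_apply, h]

lemma dot_invariant (A : Matrix.SpecialLinearGroup (Fin 3) ℚ) (x y : Fin 3 → ℚ) :
    (A.val *ᵥ x) ⬝ᵥ (Matrix.adjugate A.valᵀ *ᵥ y) = x ⬝ᵥ y := by
  rw [Matrix.dotProduct_mulVec, ← Matrix.vecMul_transpose, Matrix.vecMul_vecMul,
    Matrix.mul_adjugate, Matrix.det_transpose, A.prop, one_smul, Matrix.vecMul_one]

lemma sig_invariant (A : Matrix.SpecialLinearGroup (Fin 3) ℚ) (u u' : VV ℚ) :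
    sig (sl3Act A u) (sl3Act A u') = sig u u' := by
  rw [sl3Act_apply, sl3Act_apply]
  simp only [sig, dotR_eq]
  rw [dot_invariant]
  congr 1
  rw [dotProduct_comm, dot_invariant, dotProduct_comm]

lemma dotR_add_left (x x' y : Fin 3 → ℚ) : dotR (x + x') y = dotR x y + dotR x' y := by
  simp [dotR, add_mul, Finset.sum_add_distrib]

lemma sig_add_left (u u' w : VV ℚ) : sig (u + u') w = sig u w + sig u' w := by
  simp only [sig, Prod.fst_add, Prod.snd_add, dotR_add_left]; ring

lemma dotR_add_right (x y y' : Fin 3 → ℚ) : dotR x (y + y') = dotR x y + dotR x y' := by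
  simp [dotR, mul_add, Finset.sum_add_distrib]

lemma sig_add_right (u w w' : VV ℚ) : sig u (w + w') = sig u w + sig u w' := by
  simp only [sig, Prod.fst_add, Prod.snd_add, dotR_add_right]; ring

lemma dotR_zero_left (y : Fin 3 → ℚ) : dotR 0 y = 0 := by simp [dotR]

lemma dotR_zero_right (y : Fin 3 → ℚ) : dotR y 0 = 0 := by simp [dotR]

lemma sig_zero_left (u : VV ℚ) : sig 0 u = 0 := by
  simp [sig, dotR_zero_left]

lemma sig_zero_right (u : VV ℚ) : sig u 0 = 0 := by
  simp [sig, dotR_zero_right]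

lemma omegaQ_eq (α : ℝ) (u u' : VV ℚ) :
    OmegaQ α u u' = Circle.exp (2 * Real.pi * α * ((sig u u' : ℚ) : ℝ)) := rfl

lemma omegaT_eq (α : ℝ) (g h : GammaR ℚ) :
    OmegaT α g h = Circle.exp (2 * Real.pi * α *
      ((sig (Multiplicative.toAdd g.left) (sl3Act g.right (Multiplicative.toAdd h.left)) : ℚ) : ℝ)) := rfl

lemma toAdd_mul_left (g h : GammaR ℚ) :
    Multiplicative.toAdd (g * h).left
      = Multiplicative.toAdd g.left + sl3Act g.right (Multiplicative.toAdd h.left) := rfl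

lemma right_mul (g h : GammaR ℚ) : (g * h).right = g.right * h.right := rfl

end OmegaAux

open OmegaAux in
/-- `Ω̃_α((v,A),(w,B)) = Ω_α(v, A·w)` is a normalized 2-cocycle on
`Γ = (ℚ³ ⊕ ℚ³) ⋊ SL(3,ℚ)` restricting to `Ω_α` on the subgroup `ℚ³ ⊕ ℚ³`. -/
theorem OmegaT_is_normalized_cocycle (α : ℝ) :
    (∀ g h k : GammaR ℚ,
      OmegaT α g h * OmegaT α (g * h) k = OmegaT α g (h * k) * OmegaT α h k) ∧
    (∀ g : GammaR ℚ, OmegaT α g 1 = 1 ∧ OmegaT α 1 g = 1) ∧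
    (∀ v w : VV ℚ,
      OmegaT α (SemidirectProduct.inl (Multiplicative.ofAdd v))
        (SemidirectProduct.inl (Multiplicative.ofAdd w)) = OmegaQ α v w) := by
  refine ⟨?_, ?_, ?_⟩
  · intro g h k
    simp only [omegaT_eq, toAdd_mul_left, right_mul, ← Circle.exp_add]
    congr 1
    rw [← mul_add, ← mul_add]
    congr 1
    rw [← Rat.cast_add, ← Rat.cast_add]
    congr 1
    have h1 : sl3Act (g.right * h.right) (Multiplicative.toAdd k.left)
        = sl3Act g.right (sl3Act h.right (Multiplicative.toAdd k.left)) := by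
      rw [_root_.map_mul]; rfl
    have h2 : sl3Act g.right (Multiplicative.toAdd h.left + sl3Act h.right (Multiplicative.toAdd k.left))
        = sl3Act g.right (Multiplicative.toAdd h.left)
          + sl3Act g.right (sl3Act h.right (Multiplicative.toAdd k.left)) :=
      map_add (sl3Act g.right).toAddMonoidHom _ _
    have h3 := sig_invariant g.right (Multiplicative.toAdd h.left)
      (sl3Act h.right (Multiplicative.toAdd k.left))
    rw [h1, sig_add_left, h2, sig_add_right, h3]
    ring
  · intro g
    constructor
    · have : Multiplicative.toAdd (1 : GammaR ℚ).left = (0 : VV ℚ) := rfl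
      rw [omegaT_eq, this, map_zero, sig_zero_right]
      simp
    · have : Multiplicative.toAdd (1 : GammaR ℚ).left = (0 : VV ℚ) := rfl
      rw [omegaT_eq, this, sig_zero_left]
      simp
  · intro v w
    have h1 : (SemidirectProduct.inl (G := Matrix.SpecialLinearGroup (Fin 3) ℚ)
        (φ := sl3ActM ℚ) (Multiplicative.ofAdd v)).right = 1 := rfl
    have hw : sl3Act (1 : Matrix.SpecialLinearGroup (Fin 3) ℚ)
        (Multiplicative.toAdd (SemidirectProduct.inl (G := Matrix.SpecialLinearGroup (Fin 3) ℚ)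
          (φ := sl3ActM ℚ) (Multiplicative.ofAdd w)).left) = w := by
      rw [_root_.map_one]; rfl
    rw [omegaT_eq, h1, hw, omegaQ_eq]
    rfl
end

section
/- For α, β ∈ [0, 1/2) with α ≠ β, the restrictions of Ω_α and Ω_β to ℤ³ ⊕ ℤ³ are not cohomologous: there is no map μ : ℤ³ ⊕ ℤ³ → S¹ such that Ω_α(g,h) = μ(g) μ(h) μ(g+h)⁻¹ Ω_β(g,h) for all g, h ∈ ℤ³ ⊕ ℤ³. In particular, the family {Ω_α restricted to ℤ³ ⊕ ℤ³ : α ∈ [0,1/2)} consists of uncountably many pairwise non-cohomologous circle-valued 2-cocycles. -/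
open Matrix

/-- The multiplicative group structure on `AddAut A` of the older Mathlib
(`e₁ * e₂ = e₂.trans e₁`), which current Mathlib replaced by an additive one. -/
instance addAutGroupOld {A : Type*} [Add A] : Group (AddAut A) where
  mul g h := AddEquiv.trans h g
  one := AddEquiv.refl _
  inv := AddEquiv.symm
  mul_assoc _ _ _ := rfl
  one_mul _ := rfl
  mul_one _ := rfl
  inv_mul_cancel := AddEquiv.self_trans_symm

/-- For `α, β ∈ [0, 1/2)` with `α ≠ β`, the restrictions of `Ω_α` and `Ω_β`
to `ℤ³ ⊕ ℤ³` are not cohomologous. -/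
theorem not_cohomologous_of_ne (α β : ℝ)
    (hα : α ∈ Set.Ico (0 : ℝ) (1 / 2)) (hβ : β ∈ Set.Ico (0 : ℝ) (1 / 2)) (hne : α ≠ β) :
    ¬ ∃ μ : VV ℤ → Circle, ∀ g h : VV ℤ,
      OmegaQ α (intVec g) (intVec h) =
        μ g * μ h * (μ (g + h))⁻¹ * OmegaQ β (intVec g) (intVec h) := by
  rintro ⟨μ, hμ⟩
  set g : VV ℤ := (Pi.single 0 1, 0) with hg
  set h : VV ℤ := (0, Pi.single 0 1) with hh
  have e1 := hμ g h
  have e2 := hμ h g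
  have hgh : g + h = h + g := add_comm g h
  have key : OmegaQ α (intVec g) (intVec h) * (OmegaQ α (intVec h) (intVec g))⁻¹ =
      OmegaQ β (intVec g) (intVec h) * (OmegaQ β (intVec h) (intVec g))⁻¹ := by
    have hc : μ h * μ g * (μ (h + g))⁻¹ = μ g * μ h * (μ (g + h))⁻¹ := by
      rw [hgh, mul_comm (μ h)]
    rw [e1, e2, hc, mul_inv, mul_mul_mul_comm, mul_inv_cancel, one_mul]
  have hval : ∀ γ : ℝ, OmegaQ γ (intVec g) (intVec h) * (OmegaQ γ (intVec h) (intVec g))⁻¹ =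
      Circle.exp (2 * Real.pi * γ * 2) := by
    intro γ
    have h1 : ((dotR (intVec g).1 (intVec h).2 - dotR (intVec g).2 (intVec h).1 : ℚ) : ℝ) = 1 := by
      simp [dotR, intVec, intCast3, Fin.sum_univ_three, hg, hh, Pi.single_apply]
    have h2 : ((dotR (intVec h).1 (intVec g).2 - dotR (intVec h).2 (intVec g).1 : ℚ) : ℝ) = -1 := by
      simp [dotR, intVec, intCast3, Fin.sum_univ_three, hg, hh, Pi.single_apply]
    rw [OmegaQ, OmegaQ, h1, h2, ← Circle.exp_neg, ← Circle.exp_add]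
    ring_nf
  rw [hval α, hval β] at key
  obtain ⟨m, hm⟩ := Circle.exp_eq_exp.mp key
  have hpi := Real.pi_pos
  have : 2 * (α - β) = m := by
    have := hm
    nlinarith [this]
  have hm0 : m = 0 := by
    have h1 : |2 * (α - β)| < 1 := by
      rw [abs_lt]
      constructor <;> nlinarith [hα.1, hα.2, hβ.1, hβ.2]
    rw [this, ← Int.cast_abs] at h1
    have h2 : |m| < 1 := by exact_mod_cast h1
    rw [abs_lt] at h2
    omega
  rw [hm0] at this
  norm_num at this
  exact hne (by linarith)
end
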